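/- Let G be an r-uniform multi-hypergraph on vertex set V with m edges, let V₁, V₂, …, V_r be a partition of V for which Σᵢ d(Vᵢ) cannot be increased by moving any single vertex into V_r, and let U₁, U₂, …, U_r be another partition of V with Uᵢ ⊆ Vᵢ for each i < r (so U_r ⊇ V_r). Then Σᵢ d(Uᵢ) cannot be increased by moving any single vertex from some Uᵢ (i < r) into U_r; that is, for every i < r and every v ∈ Uᵢ, d(Uᵢ \ {v}) + d(U_r ∪ {v}) ≤ d(Uᵢ) + d(U_r). -/

import Mathlib

/-- The number of edges of the multi-hypergraph `G` (a multiset of finite edges,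
counted with multiplicity) that meet the vertex set `A`. -/
def edgesMeeting {V : Type*} [DecidableEq V] (G : Multiset (Finset V)) (A : Finset V) : ℕ :=
  Multiset.card (G.filter fun e => (A ∩ e).Nonempty)


/-- Count of edges containing `v` that miss `A`. -/
def edgesGain {V : Type*} [DecidableEq V] (G : Multiset (Finset V)) (A : Finset V) (v : V) : ℕ :=
  Multiset.card (G.filter fun e => v ∈ e ∧ ¬(A ∩ e).Nonempty)

lemma edgesMeeting_union_singleton {V : Type*} [DecidableEq V] (G : Multiset (Finset V))
    (A : Finset V) (v : V) :
    edgesMeeting G (A ∪ {v}) = edgesMeeting G A + edgesGain G A v := by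
  unfold edgesMeeting edgesGain
  induction G using Multiset.induction with
  | empty => simp
  | cons e s ih =>
    have hiff : ((A ∪ {v}) ∩ e).Nonempty ↔ (A ∩ e).Nonempty ∨ v ∈ e := by
      rw [Finset.union_inter_distrib_right]
      constructor
      · rintro ⟨w, hw⟩
        rcases Finset.mem_union.mp hw with h | h
        · exact Or.inl ⟨w, h⟩
        · exact Or.inr (by
            have := Finset.mem_inter.mp h
            simpa using by
              have hv : w = v := Finset.mem_singleton.mp this.1
              exact hv ▸ this.2)
      · rintro (⟨w, hw⟩ | h)
        · exact ⟨w, Finset.mem_union_left _ hw⟩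
        · exact ⟨v, Finset.mem_union_right _ (Finset.mem_inter.mpr ⟨Finset.mem_singleton_self v, h⟩)⟩
    by_cases h1 : (A ∩ e).Nonempty <;> by_cases h2 : v ∈ e <;>
      simp only [Multiset.filter_cons, hiff, h1, h2, if_pos, if_neg, not_true, not_false_iff,
        and_true, and_false, true_or, or_true, false_or, or_false, decide_eq_true_eq,
        Multiset.card_add, ih, decide_true, decide_false] <;>
      simp [h1, h2] <;> omega

lemma edgesMeeting_sdiff_singleton {V : Type*} [DecidableEq V] (G : Multiset (Finset V))
    (A : Finset V) (v : V) (hv : v ∈ A) :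
    edgesMeeting G A = edgesMeeting G (A \ {v}) + edgesGain G (A \ {v}) v := by
  have h : A \ {v} ∪ {v} = A :=
    Finset.sdiff_union_of_subset (Finset.singleton_subset_iff.mpr hv)
  conv_lhs => rw [← h]
  exact edgesMeeting_union_singleton G (A \ {v}) v

lemma edgesGain_anti {V : Type*} [DecidableEq V] (G : Multiset (Finset V))
    {A B : Finset V} (h : A ⊆ B) (v : V) : edgesGain G B v ≤ edgesGain G A v := by
  unfold edgesGain
  apply Multiset.card_le_card
  apply Multiset.monotone_filter_right
  intro e he
  exact ⟨he.1, fun hn => he.2 (hn.mono (Finset.inter_subset_inter h le_rfl))⟩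

/-- If `V₁, …, V_r` is a partition of the vertex set of an `r`-uniform multi-hypergraph
such that `∑ i, d(Vᵢ)` cannot be increased by moving a single vertex into the last part `V_r`,
and `U₁, …, U_r` is another partition with `Uᵢ ⊆ Vᵢ` for all `i < r` (so `U_r ⊇ V_r`),
then `∑ i, d(Uᵢ)` also cannot be increased by moving a single vertex into `U_r`:
for every `i < r` and `v ∈ Uᵢ`, `d(Uᵢ \ {v}) + d(U_r ∪ {v}) ≤ d(Uᵢ) + d(U_r)`. -/
theorem statement7 {V : Type*} [Fintype V] [DecidableEq V] (r : ℕ) (hr : 0 < r)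
    (G : Multiset (Finset V)) (hunif : ∀ e ∈ G, e.card = r)
    (m : ℕ) (hm : Multiset.card G = m)
    (P : Fin r → Finset V) (hpart : ∀ v : V, ∃! i, v ∈ P i)
    (hlocal : ∀ i : Fin r, i ≠ ⟨r - 1, by omega⟩ → ∀ v ∈ P i,
      edgesMeeting G (P i \ {v}) + edgesMeeting G (P ⟨r - 1, by omega⟩ ∪ {v}) ≤
        edgesMeeting G (P i) + edgesMeeting G (P ⟨r - 1, by omega⟩))
    (U : Fin r → Finset V) (hUpart : ∀ v : V, ∃! i, v ∈ U i)
    (hsub : ∀ i : Fin r, (i : ℕ) < r - 1 → U i ⊆ P i) :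
    ∀ i : Fin r, i ≠ ⟨r - 1, by omega⟩ → ∀ v ∈ U i,
      edgesMeeting G (U i \ {v}) + edgesMeeting G (U ⟨r - 1, by omega⟩ ∪ {v}) ≤
        edgesMeeting G (U i) + edgesMeeting G (U ⟨r - 1, by omega⟩) := by
  intro i hi v hv
  set l : Fin r := ⟨r - 1, by omega⟩ with hl
  have hival : (i : ℕ) < r - 1 := by
    have := i.isLt
    have : (i : ℕ) ≠ r - 1 := fun h => hi (Fin.ext h)
    omega
  have hvP : v ∈ P i := hsub i hival hv
  -- P l ⊆ U l
  have hPlUl : P l ⊆ U l := by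
    intro w hw
    obtain ⟨j, hj, _⟩ := hUpart w
    by_cases hjl : j = l
    · rwa [hjl] at hj
    · exfalso
      have hjval : (j : ℕ) < r - 1 := by
        have := j.isLt
        have : (j : ℕ) ≠ r - 1 := fun h => hjl (Fin.ext h)
        omega
      have hwPj : w ∈ P j := hsub j hjval hj
      obtain ⟨k, _, hk⟩ := hpart w
      exact hjl ((hk j hwPj).trans (hk l hw).symm)
  have hUiPi : U i \ {v} ⊆ P i \ {v} :=
    Finset.sdiff_subset_sdiff (hsub i hival) le_rfl
  have key : edgesGain G (P l) v ≤ edgesGain G (P i \ {v}) v := by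
    have h := hlocal i hi v hvP
    rw [edgesMeeting_union_singleton G (P l) v,
        edgesMeeting_sdiff_singleton G (P i) v hvP] at h
    omega
  calc edgesMeeting G (U i \ {v}) + edgesMeeting G (U l ∪ {v})
      = edgesMeeting G (U i \ {v}) + (edgesMeeting G (U l) + edgesGain G (U l) v) := by
        rw [edgesMeeting_union_singleton]
    _ ≤ edgesMeeting G (U i \ {v}) + (edgesMeeting G (U l) + edgesGain G (U i \ {v}) v) := by
        have : edgesGain G (U l) v ≤ edgesGain G (U i \ {v}) v :=
          le_trans (edgesGain_anti G hPlUl v)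
            (le_trans key (edgesGain_anti G hUiPi v))
        omega
    _ = edgesMeeting G (U i) + edgesMeeting G (U l) := by
        rw [edgesMeeting_sdiff_singleton G (U i) v hv]; omega
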